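/- Let A ∈ ℝ^{m×n} and C ∈ ℝ^{m×c} satisfy |xᵀAAᵀx − xᵀCCᵀx| ≤ 3ε‖A‖_F² for all unit vectors x ∈ ℝ^m, with 0 < ε < 1. Let H_k consist of the top k left singular vectors of C (k ≤ c). Then ‖A − H_kH_kᵀA‖₂² ≤ ‖A − A_k‖₂² + 6ε‖A‖_F², where ‖·‖₂ is the spectral norm and A_k is the best rank-k approximation of A. -/

import Mathlib

open Matrix

noncomputable def frobSq {m n : ℕ} (A : Matrix (Fin m) (Fin n) ℝ) : ℝ :=
  ∑ i, ∑ j, (A i j)^2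

noncomputable def eunorm {m : ℕ} (v : Fin m → ℝ) : ℝ := Real.sqrt (v ⬝ᵥ v)

lemma hermAAT {m n : ℕ} (A : Matrix (Fin m) (Fin n) ℝ) : (A * Aᵀ).IsHermitian := by
  have h : Aᵀ = Aᴴ := by
    ext i j
    simp [Matrix.conjTranspose_apply]
  rw [h]
  exact Matrix.isHermitian_mul_conjTranspose_self A

/-- `svalSq A k` : square of the `(k+1)`-st largest singular value of `A`
(eigenvalues of `A * Aᵀ` sorted in decreasing order), `0` beyond index `m`. -/
noncomputable def svalSq {m n : ℕ} (A : Matrix (Fin m) (Fin n) ℝ) (k : ℕ) : ℝ :=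
  if k < m then
    (Multiset.sort (Finset.univ.val.map (hermAAT A).eigenvalues) (· ≤ ·)).getD (m - 1 - k) 0
  else 0

/-- Spectral (operator) norm of a square real matrix. -/
noncomputable def specNorm {m : ℕ} (M : Matrix (Fin m) (Fin m) ℝ) : ℝ :=
  ‖Matrix.toEuclideanCLM (𝕜 := ℝ) M‖

namespace AuxStmt8

variable {m : ℕ} {M : Matrix (Fin m) (Fin m) ℝ}

/-- ascending sorted eigenvalues -/
noncomputable def ascEig {M : Matrix (Fin m) (Fin m) ℝ} (hM : M.IsHermitian) : Fin m → ℝ :=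
  hM.eigenvalues ∘ Tuple.sort hM.eigenvalues

lemma ascEig_monotone {M : Matrix (Fin m) (Fin m) ℝ} (hM : M.IsHermitian) :
    Monotone (ascEig hM) := Tuple.monotone_sort _

lemma sort_eq_ofFn {M : Matrix (Fin m) (Fin m) ℝ} (hM : M.IsHermitian) :
    Multiset.sort (Finset.univ.val.map hM.eigenvalues) (· ≤ ·) = List.ofFn (ascEig hM) := by
  have hperm : (Multiset.sort (Finset.univ.val.map hM.eigenvalues) (· ≤ ·)).Perm
      (List.ofFn (ascEig hM)) := by
    rw [← Multiset.coe_eq_coe, Multiset.sort_eq]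
    rw [← Fin.univ_val_map]
    have : ascEig hM = fun i => hM.eigenvalues (Tuple.sort hM.eigenvalues i) := rfl
    rw [this]
    have h2 : (Finset.univ.val.map fun i => hM.eigenvalues (Tuple.sort hM.eigenvalues i))
        = (Finset.univ.val.map ⇑(Tuple.sort hM.eigenvalues)).map hM.eigenvalues := by
      rw [Multiset.map_map]; rfl
    rw [h2]
    congr 1
    have h3 : Finset.univ.val.map ⇑(Tuple.sort hM.eigenvalues) = Finset.univ.val := by
      have h4 := Finset.map_univ_equiv (Tuple.sort hM.eigenvalues)
      calc Finset.univ.val.map ⇑(Tuple.sort hM.eigenvalues)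
          = (Finset.univ.map (Tuple.sort hM.eigenvalues).toEmbedding).val := by
            rw [Finset.map_val]; rfl
        _ = Finset.univ.val := by rw [h4]
    exact h3.symm
  exact List.Perm.eq_of_pairwise' (Multiset.pairwise_sort ..)
    ((ascEig_monotone hM).sortedLE_ofFn.pairwise) hperm

lemma svalSq_eq_ascEig {n : ℕ} (A : Matrix (Fin m) (Fin n) ℝ) (k : ℕ) (hkm : k < m) :
    svalSq A k = ascEig (hermAAT A) ⟨m - 1 - k, by omega⟩ := by
  rw [svalSq, if_pos hkm, sort_eq_ofFn]
  rw [List.getD_eq_getElem _ _ (by simp; omega)]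
  simp [List.getElem_ofFn]

lemma svalSq_nonneg {n : ℕ} (A : Matrix (Fin m) (Fin n) ℝ) (k : ℕ) : 0 ≤ svalSq A k := by
  rcases lt_or_ge k m with hkm | hkm
  · rw [svalSq_eq_ascEig A k hkm]
    have hAH : Aᵀ = Aᴴ := by
      ext i j
      simp [Matrix.conjTranspose_apply]
    have hpsd : (A * Aᵀ).PosSemidef := by
      rw [hAH]
      exact Matrix.posSemidef_self_mul_conjTranspose A
    exact hpsd.eigenvalues_nonneg _
  · rw [svalSq, if_neg (by omega)]

noncomputable def Uu (hM : M.IsHermitian) : Matrix (Fin m) (Fin m) ℝ :=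
  (Matrix.IsHermitian.eigenvectorUnitary hM : Matrix (Fin m) (Fin m) ℝ)

lemma star_Uu (hM : M.IsHermitian) : star (Uu hM) = (Uu hM)ᵀ := by
  rw [Matrix.star_eq_conjTranspose, Matrix.conjTranspose_eq_transpose_of_trivial]

lemma Uu_mul_transpose (hM : M.IsHermitian) : Uu hM * (Uu hM)ᵀ = 1 := by
  rw [← star_Uu]
  exact (Matrix.mem_unitaryGroup_iff).mp (Matrix.IsHermitian.eigenvectorUnitary hM).2

lemma transpose_mul_Uu (hM : M.IsHermitian) : (Uu hM)ᵀ * Uu hM = 1 := by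
  rw [← star_Uu]
  exact (Matrix.mem_unitaryGroup_iff').mp (Matrix.IsHermitian.eigenvectorUnitary hM).2

noncomputable def coeff (hM : M.IsHermitian) (x : Fin m → ℝ) : Fin m → ℝ :=
  (Uu hM)ᵀ *ᵥ x

lemma dot_Uu_mulVec (hM : M.IsHermitian) (x w : Fin m → ℝ) :
    x ⬝ᵥ (Uu hM *ᵥ w) = coeff hM x ⬝ᵥ w := by
  rw [coeff, mulVec_transpose, dotProduct_mulVec]

lemma coeff_dot (hM : M.IsHermitian) (x y : Fin m → ℝ) :
    coeff hM x ⬝ᵥ coeff hM y = x ⬝ᵥ y := by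
  rw [← dot_Uu_mulVec, coeff, mulVec_mulVec, Uu_mul_transpose, one_mulVec]

lemma spectral (hM : M.IsHermitian) :
    M = Uu hM * diagonal hM.eigenvalues * (Uu hM)ᵀ := by
  rw [← star_Uu]
  have := Matrix.IsHermitian.spectral_theorem hM
  rw [Unitary.conjStarAlgAut_apply] at this
  exact this

lemma quadform_eq (hM : M.IsHermitian) (x : Fin m → ℝ) :
    x ⬝ᵥ (M *ᵥ x) = ∑ i, hM.eigenvalues i * (coeff hM x i)^2 := by
  conv_lhs => rw [spectral hM]
  rw [← mulVec_mulVec, ← mulVec_mulVec, dot_Uu_mulVec]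
  rw [show (Uu hM)ᵀ *ᵥ x = coeff hM x from rfl]
  rw [dotProduct]
  apply Finset.sum_congr rfl
  intro i _
  rw [mulVec_diagonal]
  ring

lemma coeff_sum_sq (hM : M.IsHermitian) (x : Fin m → ℝ) :
    ∑ i, (coeff hM x i)^2 = x ⬝ᵥ x := by
  rw [← coeff_dot hM x x, dotProduct]
  apply Finset.sum_congr rfl
  intro i _; ring

lemma coeff_eigenvector (hM : M.IsHermitian) {v : Fin m → ℝ} {lam : ℝ}
    (hv : M *ᵥ v = lam • v) {i : Fin m} (hne : hM.eigenvalues i ≠ lam) :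
    coeff hM v i = 0 := by
  have hUM : (Uu hM)ᵀ * M = diagonal hM.eigenvalues * (Uu hM)ᵀ := by
    have h0 : (Uu hM)ᵀ * M
        = (Uu hM)ᵀ * (Uu hM * diagonal hM.eigenvalues * (Uu hM)ᵀ) :=
      congrArg _ (spectral hM)
    rw [h0, ← Matrix.mul_assoc, ← Matrix.mul_assoc, transpose_mul_Uu, Matrix.one_mul]
  have h1 : coeff hM (M *ᵥ v) = diagonal hM.eigenvalues *ᵥ coeff hM v := by
    rw [coeff, coeff, mulVec_mulVec, mulVec_mulVec, hUM]
  rw [hv] at h1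
  have h2 : coeff hM (lam • v) i = (diagonal hM.eigenvalues *ᵥ coeff hM v) i := by rw [h1]
  rw [coeff, mulVec_smul, mulVec_diagonal] at h2
  have h3 : (lam - hM.eigenvalues i) * coeff hM v i = 0 := by
    have : lam * coeff hM v i = hM.eigenvalues i * coeff hM v i := h2
    ring_nf
    ring_nf at this
    linarith [this]
  rcases mul_eq_zero.mp h3 with h | h
  · exact absurd (by linarith [sub_eq_zero.mp h]) hne
  · exact h

lemma coeff_col (hM : M.IsHermitian) (j : Fin m) :
    coeff hM (fun i => Uu hM i j) = Pi.single j 1 := by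
  ext i
  have h := congrFun (congrFun (transpose_mul_Uu hM) i) j
  simp only [Matrix.mul_apply, Matrix.transpose_apply] at h
  rw [coeff]
  simp only [mulVec, dotProduct, Matrix.transpose_apply]
  rw [h, Matrix.one_apply]
  by_cases hij : i = j <;> simp [hij, Pi.single_apply]

lemma mulVec_col (hM : M.IsHermitian) (j : Fin m) :
    M *ᵥ (fun i => Uu hM i j) = hM.eigenvalues j • (fun i => Uu hM i j) := by
  have hMU : M * Uu hM = Uu hM * diagonal hM.eigenvalues := by
    have h0 : M * Uu hM
        = Uu hM * diagonal hM.eigenvalues * (Uu hM)ᵀ * Uu hM :=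
      congrArg (· * Uu hM) (spectral hM)
    rw [h0, Matrix.mul_assoc (Uu hM * diagonal hM.eigenvalues), transpose_mul_Uu,
      Matrix.mul_one]
  ext i
  simp only [mulVec, dotProduct]
  calc ∑ x, M i x * Uu hM x j = (M * Uu hM) i j := by rw [Matrix.mul_apply]
    _ = (Uu hM * diagonal hM.eigenvalues) i j := by rw [hMU]
    _ = Uu hM i j * hM.eigenvalues j := by rw [Matrix.mul_diagonal]
    _ = (hM.eigenvalues j • fun i => Uu hM i j) i := by simp [mul_comm]

lemma col_unit (hM : M.IsHermitian) (j : Fin m) :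
    (fun i => Uu hM i j) ⬝ᵥ (fun i => Uu hM i j) = 1 := by
  rw [← coeff_dot hM, coeff_col]
  simp [dotProduct, Pi.single_apply]

lemma coeff_combo {ι : Type*} [Fintype ι] (hM : M.IsHermitian) (a : ι → ℝ)
    (q : ι → Fin m → ℝ) (i : Fin m) :
    coeff hM (fun i0 => ∑ j, a j * q j i0) i = ∑ j, a j * coeff hM (q j) i := by
  simp only [coeff, mulVec, dotProduct, Finset.mul_sum]
  rw [Finset.sum_comm]
  apply Finset.sum_congr rfl
  intro j _
  apply Finset.sum_congr rfl
  intro x _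
  ring

/-- Weyl-type comparison of sorted eigenvalues. -/
lemma weyl {M₁ M₂ : Matrix (Fin m) (Fin m) ℝ} (h₁ : M₁.IsHermitian) (h₂ : M₂.IsHermitian)
    {δ : ℝ} (hcomp : ∀ x : Fin m → ℝ, x ⬝ᵥ x = 1 → x ⬝ᵥ (M₂ *ᵥ x) ≤ x ⬝ᵥ (M₁ *ᵥ x) + δ)
    {k : ℕ} (hkm : k < m) :
    ascEig h₂ ⟨m - 1 - k, by omega⟩ ≤ ascEig h₁ ⟨m - 1 - k, by omega⟩ + δ := by
  set μ₂ : ℝ := ascEig h₂ ⟨m - 1 - k, by omega⟩ with hμ₂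
  set μ₁ : ℝ := ascEig h₁ ⟨m - 1 - k, by omega⟩ with hμ₁
  set σ₁ := Tuple.sort h₁.eigenvalues with hσ₁
  set σ₂ := Tuple.sort h₂.eigenvalues with hσ₂
  have hidx2ok : ∀ j : Fin (k+1), m - 1 - (j : ℕ) < m := fun j => by omega
  have hidx1ok : ∀ j : Fin k, m - 1 - (j : ℕ) < m := fun j => by omega
  set idx2 : Fin (k+1) → Fin m := fun j => σ₂ ⟨m - 1 - (j : ℕ), hidx2ok j⟩ with hidx2
  set idx1 : Fin k → Fin m := fun j => σ₁ ⟨m - 1 - (j : ℕ), hidx1ok j⟩ with hidx1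
  have hidx2inj : Function.Injective idx2 := by
    intro a b hab
    have := σ₂.injective hab
    have := Fin.mk.injEq (m - 1 - (a:ℕ)) (hidx2ok a) (m - 1 - (b:ℕ)) (hidx2ok b) ▸ this
    have ha := a.isLt; have hb := b.isLt
    ext
    omega
  set p : Fin (k+1) → (Fin m → ℝ) := fun j => (fun i => Uu h₂ i (idx2 j)) with hp
  set G : Matrix (Fin k) (Fin (k+1)) ℝ := Matrix.of (fun j i => coeff h₁ (p i) (idx1 j)) with hG
  obtain ⟨a, haker, hane⟩ : ∃ a, a ∈ LinearMap.ker G.mulVecLin ∧ a ≠ 0 := by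
    have hlt : Module.finrank ℝ (Fin k → ℝ) < Module.finrank ℝ (Fin (k+1) → ℝ) := by
      rw [Module.finrank_fintype_fun_eq_card, Module.finrank_fintype_fun_eq_card]
      simp
    have := LinearMap.ker_ne_bot_of_finrank_lt (f := G.mulVecLin) hlt
    exact (Submodule.ne_bot_iff _).mp this
  have haG : G *ᵥ a = 0 := haker
  set u : Fin m → ℝ := fun i0 => ∑ j, a j * p j i0 with hu
  have hc2 : ∀ i, coeff h₂ u i = ∑ j, a j * (Pi.single (idx2 j) 1 : Fin m → ℝ) i := by
    intro i
    rw [hu, coeff_combo]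
    apply Finset.sum_congr rfl
    intro j _
    rw [hp, coeff_col]
  have hc2' : ∀ j, coeff h₂ u (idx2 j) = a j := by
    intro j
    rw [hc2]
    rw [Finset.sum_eq_single j]
    · simp
    · intro b _ hbj
      have : idx2 b ≠ idx2 j := fun h => hbj (hidx2inj h)
      simp [Pi.single_apply, this]
    · simp
  have hc2'' : ∀ i, i ∉ Finset.univ.image idx2 → coeff h₂ u i = 0 := by
    intro i hi
    rw [hc2]
    apply Finset.sum_eq_zero
    intro j _
    have : idx2 j ≠ i := by
      intro h; exact hi (Finset.mem_image.mpr ⟨j, Finset.mem_univ _, h⟩)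
    simp [Pi.single_apply, this]
  set S : ℝ := ∑ j, (a j)^2 with hS
  have hSpos : 0 < S := by
    have : ∃ j, a j ≠ 0 := by
      by_contra h
      push_neg at h
      exact hane (funext h)
    obtain ⟨j0, hj0⟩ := this
    apply Finset.sum_pos' (fun j _ => sq_nonneg _) ⟨j0, Finset.mem_univ _, by positivity⟩
  have huu : u ⬝ᵥ u = S := by
    rw [← coeff_sum_sq h₂ u, hS]
    rw [← Finset.sum_subset (Finset.subset_univ (Finset.univ.image idx2))
      (fun i _ hi => by rw [hc2'' i hi]; ring)]
    rw [Finset.sum_image (fun a _ b _ h => hidx2inj h)]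
    exact Finset.sum_congr rfl (fun j _ => by rw [hc2' j])
  have hq2 : μ₂ * S ≤ u ⬝ᵥ (M₂ *ᵥ u) := by
    rw [quadform_eq h₂ u, Finset.mul_sum]
    rw [← Finset.sum_subset (Finset.subset_univ (Finset.univ.image idx2))
      (fun i _ hi => by rw [hc2'' i hi]; ring)]
    rw [Finset.sum_image (fun a _ b _ h => hidx2inj h)]
    apply Finset.sum_le_sum
    intro j _
    rw [hc2' j]
    have hev : h₂.eigenvalues (idx2 j) = ascEig h₂ ⟨m - 1 - (j:ℕ), hidx2ok j⟩ := rfl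
    have hmono : μ₂ ≤ h₂.eigenvalues (idx2 j) := by
      rw [hev, hμ₂]
      apply ascEig_monotone
      have := j.isLt
      simp only [Fin.mk_le_mk]
      omega
    nlinarith [sq_nonneg (a j)]
  have hc1 : ∀ j : Fin k, coeff h₁ u (idx1 j) = 0 := by
    intro j
    rw [hu, coeff_combo]
    have : (G *ᵥ a) j = 0 := by rw [haG]; rfl
    rw [← this, mulVec, dotProduct]
    apply Finset.sum_congr rfl
    intro i _
    rw [hG]
    simp only [Matrix.of_apply]
    ring
  have hq1 : u ⬝ᵥ (M₁ *ᵥ u) ≤ μ₁ * S := by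
    rw [quadform_eq h₁ u, ← huu, ← coeff_sum_sq h₁ u, Finset.mul_sum]
    apply Finset.sum_le_sum
    intro i _
    by_cases hi : i ∈ Finset.univ.image idx1
    · obtain ⟨j, _, hj⟩ := Finset.mem_image.mp hi
      rw [← hj, hc1 j]
      simp
    · have hev : h₁.eigenvalues i ≤ μ₁ := by
        set j' := σ₁.symm i with hj'
        have hval : h₁.eigenvalues i = ascEig h₁ j' := by
          simp [ascEig, hj', hσ₁]
        by_cases hjv : (j' : ℕ) ≤ m - 1 - k
        · rw [hval, hμ₁]
          exact ascEig_monotone h₁ (Fin.le_def.mpr hjv)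
        · exfalso
          push_neg at hjv
          have hj'lt := j'.isLt
          have hjj : m - 1 - (j' : ℕ) < k := by omega
          apply hi
          refine Finset.mem_image.mpr ⟨⟨m - 1 - (j' : ℕ), hjj⟩, Finset.mem_univ _, ?_⟩
          rw [hidx1]
          have : (⟨m - 1 - (m - 1 - (j' : ℕ)), by omega⟩ : Fin m) = j' := by
            ext; simp; omega
          simp only [this, hj']
          exact (congrArg σ₁ this).trans (σ₁.apply_symm_apply i)
      nlinarith [sq_nonneg (coeff h₁ u i)]
  set x : Fin m → ℝ := (Real.sqrt S)⁻¹ • u with hx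
  have hsq : (Real.sqrt S)⁻¹ * (Real.sqrt S)⁻¹ = S⁻¹ := by
    rw [← mul_inv]
    rw [Real.mul_self_sqrt hSpos.le]
  have hxx : x ⬝ᵥ x = 1 := by
    rw [hx, smul_dotProduct, dotProduct_smul, huu, smul_eq_mul, smul_eq_mul, ← mul_assoc,
      hsq]
    field_simp
  have hscale : ∀ N : Matrix (Fin m) (Fin m) ℝ, x ⬝ᵥ (N *ᵥ x) = S⁻¹ * (u ⬝ᵥ (N *ᵥ u)) := by
    intro N
    rw [hx, smul_dotProduct, mulVec_smul, dotProduct_smul, smul_eq_mul, smul_eq_mul,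
      ← mul_assoc, hsq]
  have hfinal := hcomp x hxx
  rw [hscale M₂, hscale M₁] at hfinal
  have h2' : μ₂ = S⁻¹ * (μ₂ * S) := by field_simp
  have h1' : S⁻¹ * (μ₁ * S) = μ₁ := by field_simp
  have hle2 : S⁻¹ * (μ₂ * S) ≤ S⁻¹ * (u ⬝ᵥ (M₂ *ᵥ u)) :=
    mul_le_mul_of_nonneg_left hq2 (by positivity)
  have hle1 : S⁻¹ * (u ⬝ᵥ (M₁ *ᵥ u)) ≤ S⁻¹ * (μ₁ * S) :=
    mul_le_mul_of_nonneg_left hq1 (by positivity)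
  linarith

lemma rayleigh_orth (hM : M.IsHermitian) {k : ℕ} (hkm : k < m)
    {h : Fin k → (Fin m → ℝ)}
    (horth : ∀ j j' : Fin k, h j ⬝ᵥ h j' = if j = j' then 1 else 0)
    (heig : ∀ j : Fin k, M *ᵥ h j = ascEig hM ⟨m - 1 - (j : ℕ), by omega⟩ • h j)
    {w : Fin m → ℝ} (hw : w ⬝ᵥ w = 1) (hwo : ∀ j, h j ⬝ᵥ w = 0) :
    w ⬝ᵥ (M *ᵥ w) ≤ ascEig hM ⟨m - 1 - k, by omega⟩ := by
  set μk : ℝ := ascEig hM ⟨m - 1 - k, by omega⟩ with hμk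
  set σ := Tuple.sort hM.eigenvalues with hσ
  have hials : ∀ i : Fin m, hM.eigenvalues i = ascEig hM (σ.symm i) := by
    intro i
    simp [ascEig, hσ]
  have hbig : ∀ i : Fin m, μk < hM.eigenvalues i → m - 1 - k < ((σ.symm i : Fin m) : ℕ) := by
    intro i hi
    by_contra hle
    push_neg at hle
    have : hM.eigenvalues i ≤ μk := by
      rw [hials i, hμk]
      exact ascEig_monotone hM (Fin.le_def.mpr hle)
    linarith
  have hsupp : ∀ (j : Fin k), μk < ascEig hM ⟨m - 1 - (j : ℕ), by omega⟩ →
      ∀ i : Fin m, ¬ (μk < hM.eigenvalues i) → coeff hM (h j) i = 0 := by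
    intro j hj i hi
    apply coeff_eigenvector hM (heig j)
    intro hcontra
    rw [hcontra] at hi
    exact hi hj
  set Tt := {i : Fin m // μk < hM.eigenvalues i} with hTt
  have hjOflt : ∀ i : Tt, m - 1 - ((σ.symm i.1 : Fin m) : ℕ) < k := by
    intro i
    have h1 := hbig i.1 i.2
    have h2 := (σ.symm i.1).isLt
    omega
  set jOf : Tt → Fin k := fun i => ⟨m - 1 - ((σ.symm i.1 : Fin m) : ℕ), hjOflt i⟩ with hjOf
  have hjOfbig : ∀ i : Tt, μk < ascEig hM ⟨m - 1 - ((jOf i : ℕ)), by omega⟩ := by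
    intro i
    have h1 := hbig i.1 i.2
    have h2 := (σ.symm i.1).isLt
    have heq : (⟨m - 1 - ((jOf i : ℕ)), by omega⟩ : Fin m) = σ.symm i.1 := by
      ext
      simp only [hjOf]
      omega
    rw [heq, ← hials]
    exact i.2
  have hjOfinj : Function.Injective jOf := by
    intro r r' hrr
    have h1 := hbig r.1 r.2
    have h2 := hbig r'.1 r'.2
    have h3 := (σ.symm r.1).isLt
    have h4 := (σ.symm r'.1).isLt
    have h5 : (jOf r : ℕ) = (jOf r' : ℕ) := by rw [hrr]
    simp only [hjOf] at h5
    have h6 : ((σ.symm r.1 : Fin m) : ℕ) = ((σ.symm r'.1 : Fin m) : ℕ) := by omega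
    have h7 : σ.symm r.1 = σ.symm r'.1 := Fin.ext h6
    exact Subtype.ext (σ.symm.injective h7)
  set D : Matrix Tt Tt ℝ := Matrix.of (fun r i => coeff hM (h (jOf r)) i.1) with hD
  have hsum_ext : ∀ f : Fin m → ℝ, (∀ i, ¬ (μk < hM.eigenvalues i) → f i = 0) →
      ∑ i : Tt, f i.1 = ∑ i, f i := by
    intro f hf
    rw [← Finset.sum_subtype (Finset.univ.filter (fun i => μk < hM.eigenvalues i))
      (fun x => by simp) f]
    exact Finset.sum_filter_of_ne (fun x _ hx => by_contra (fun hc => hx (hf x hc)))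
  have hDDT : D * Dᵀ = 1 := by
    ext r r'
    rw [Matrix.mul_apply]
    simp only [hD, Matrix.of_apply, Matrix.transpose_apply]
    rw [hsum_ext (fun i => coeff hM (h (jOf r)) i * coeff hM (h (jOf r')) i)
      (fun i hi => by simp only [hsupp (jOf r) (hjOfbig r) i hi, zero_mul])]
    have heq : ∑ i, coeff hM (h (jOf r)) i * coeff hM (h (jOf r')) i
        = coeff hM (h (jOf r)) ⬝ᵥ coeff hM (h (jOf r')) := rfl
    rw [heq, coeff_dot, horth]
    by_cases hrr : r = r'
    · simp [hrr, Matrix.one_apply]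
    · have : jOf r ≠ jOf r' := fun hc => hrr (hjOfinj hc)
      simp [this, Matrix.one_apply, hrr]
  have hDTD : Dᵀ * D = 1 := mul_eq_one_comm.mp hDDT
  have hDc : D *ᵥ (fun i : Tt => coeff hM w i.1) = 0 := by
    ext r
    rw [mulVec, dotProduct]
    simp only [hD, Matrix.of_apply]
    rw [hsum_ext (fun i => coeff hM (h (jOf r)) i * coeff hM w i)
      (fun i hi => by simp only [hsupp (jOf r) (hjOfbig r) i hi, zero_mul])]
    have heq : ∑ i, coeff hM (h (jOf r)) i * coeff hM w i
        = coeff hM (h (jOf r)) ⬝ᵥ coeff hM w := rfl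
    rw [heq, coeff_dot, hwo]
    rfl
  have hczero : ∀ i : Fin m, μk < hM.eigenvalues i → coeff hM w i = 0 := by
    intro i hi
    have h1 : (fun i : Tt => coeff hM w i.1) = Dᵀ *ᵥ (D *ᵥ (fun i : Tt => coeff hM w i.1)) := by
      rw [mulVec_mulVec, hDTD, one_mulVec]
    have h2 : (fun i : Tt => coeff hM w i.1) = 0 := by
      rw [h1, hDc, mulVec_zero]
    exact congrFun h2 ⟨i, hi⟩
  rw [quadform_eq hM w]
  calc ∑ i, hM.eigenvalues i * (coeff hM w i)^2 ≤ ∑ i, μk * (coeff hM w i)^2 := by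
        apply Finset.sum_le_sum
        intro i _
        by_cases hi : μk < hM.eigenvalues i
        · rw [hczero i hi]
          ring_nf
          rfl
        · push_neg at hi
          nlinarith [sq_nonneg (coeff hM w i)]
    _ = μk * ∑ i, (coeff hM w i)^2 := by rw [Finset.mul_sum]
    _ = μk := by rw [coeff_sum_sq hM w, hw, mul_one]

lemma dot_mul_transpose {n : ℕ} (N : Matrix (Fin m) (Fin n) ℝ) (x y : Fin m → ℝ) :
    x ⬝ᵥ ((N * Nᵀ) *ᵥ y) = (Nᵀ *ᵥ x) ⬝ᵥ (Nᵀ *ᵥ y) := by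
  rw [← mulVec_mulVec, dotProduct_mulVec, mulVec_transpose, mulVec_transpose]

lemma dot_self_nonneg (v : Fin m → ℝ) : 0 ≤ v ⬝ᵥ v :=
  Finset.sum_nonneg fun i _ => mul_self_nonneg _

end AuxStmt8

open AuxStmt8 in
theorem stmt8 {m n c k : ℕ} (A : Matrix (Fin m) (Fin n) ℝ) (C : Matrix (Fin m) (Fin c) ℝ)
    (ε : ℝ) (hε0 : 0 < ε) (hε1 : ε < 1)
    (hRQ : ∀ x : Fin m → ℝ, x ⬝ᵥ x = 1 →
      |x ⬝ᵥ ((A * Aᵀ) *ᵥ x) - x ⬝ᵥ ((C * Cᵀ) *ᵥ x)| ≤ 3 * ε * frobSq A)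
    (hk : k ≤ c)
    (H : Matrix (Fin m) (Fin k) ℝ) (hH : Hᵀ * H = 1)
    (hsing : ∀ i : Fin k,
      (C * Cᵀ) *ᵥ (fun x => H x i) = svalSq C (i : ℕ) • (fun x => H x i)) :
    svalSq (A - H * Hᵀ * A) 0 ≤ svalSq A k + 6 * ε * frobSq A := by
  have hfrob : 0 ≤ frobSq A :=
    Finset.sum_nonneg fun i _ => Finset.sum_nonneg fun j _ => sq_nonneg _
  have hsvalA : 0 ≤ svalSq A k := svalSq_nonneg A k
  by_cases hm : m = 0
  · subst hm
    rw [show svalSq (A - H * Hᵀ * A) 0 = 0 from by rw [svalSq, if_neg (by omega)]]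
    nlinarith
  have hm0 : 0 < m := Nat.pos_of_ne_zero hm
  -- k ≤ m
  have hkm : k ≤ m := by
    have h1 : (1 : Matrix (Fin k) (Fin k) ℝ).rank = k := by
      rw [Matrix.rank_one, Fintype.card_fin]
    have h2 : (Hᵀ * H).rank ≤ H.rank := Matrix.rank_mul_le_right Hᵀ H
    have h3 : H.rank ≤ m := by
      have := Matrix.rank_le_card_height H
      simpa using this
    rw [hH, h1] at h2
    omega
  set B := A - H * Hᵀ * A with hBdef
  rw [svalSq_eq_ascEig B 0 hm0]
  set lam := ascEig (hermAAT B) ⟨m - 1 - 0, by omega⟩ with hlam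
  set j0 := Tuple.sort (hermAAT B).eigenvalues ⟨m - 1 - 0, by omega⟩ with hj0
  set v : Fin m → ℝ := fun i => Uu (hermAAT B) i j0 with hv
  have hvunit : v ⬝ᵥ v = 1 := col_unit _ j0
  have hveig : (B * Bᵀ) *ᵥ v = lam • v := mulVec_col (hermAAT B) j0
  set z : Fin m → ℝ := v - (H * Hᵀ) *ᵥ v with hz
  have hlam1 : lam = (Bᵀ *ᵥ v) ⬝ᵥ (Bᵀ *ᵥ v) := by
    rw [← dot_mul_transpose, hveig, dotProduct_smul, smul_eq_mul, hvunit, mul_one]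
  have hBt : Bᵀ *ᵥ v = Aᵀ *ᵥ z := by
    have hsym : (H * Hᵀ)ᵀ = H * Hᵀ := by
      rw [Matrix.transpose_mul, Matrix.transpose_transpose]
    rw [hBdef, Matrix.transpose_sub, Matrix.sub_mulVec]
    rw [show (H * Hᵀ * A)ᵀ = Aᵀ * (H * Hᵀ) from by
      rw [Matrix.transpose_mul, hsym]]
    rw [hz, mulVec_sub, ← mulVec_mulVec]
  have hHz : Hᵀ *ᵥ z = 0 := by
    rw [hz, mulVec_sub, mulVec_mulVec, ← Matrix.mul_assoc, hH, Matrix.one_mul, sub_self]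
  have hPv : z ⬝ᵥ ((H * Hᵀ) *ᵥ v) = 0 := by
    rw [dot_mul_transpose, hHz, zero_dotProduct]
  have hzv : z ⬝ᵥ z = z ⬝ᵥ v := by
    have : z ⬝ᵥ z = z ⬝ᵥ v - z ⬝ᵥ ((H * Hᵀ) *ᵥ v) := by
      rw [hz]
      rw [dotProduct_sub]
    rw [this, hPv, sub_zero]
  have hzz_le : z ⬝ᵥ z ≤ 1 := by
    have h1 : z ⬝ᵥ v = v ⬝ᵥ v - ((H * Hᵀ) *ᵥ v) ⬝ᵥ v := by
      rw [hz, sub_dotProduct]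
    have h2 : ((H * Hᵀ) *ᵥ v) ⬝ᵥ v = (Hᵀ *ᵥ v) ⬝ᵥ (Hᵀ *ᵥ v) := by
      rw [dotProduct_comm, dot_mul_transpose]
    have h3 := dot_self_nonneg (Hᵀ *ᵥ v)
    rw [hzv, h1, h2, hvunit]
    linarith
  by_cases hz0 : z = 0
  · have : lam = 0 := by
      rw [hlam1, hBt, hz0, mulVec_zero, dotProduct_zero]
    rw [this]
    nlinarith
  -- z ≠ 0, hence k < m
  have hklt : k < m := by
    rcases eq_or_lt_of_le hkm with heq | hlt
    · exfalso
      subst heq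
      have hHH : H * Hᵀ = 1 := mul_eq_one_comm.mp hH
      apply hz0
      rw [hz, hHH, one_mulVec, sub_self]
    · exact hlt
  set zz := z ⬝ᵥ z with hzzdef
  have hzzpos : 0 < zz := by
    rcases lt_or_eq_of_le (dot_self_nonneg z) with h | h
    · exact h
    · exact absurd (dotProduct_self_eq_zero.mp h.symm) hz0
  set w : Fin m → ℝ := (Real.sqrt zz)⁻¹ • z with hw
  have hsq : (Real.sqrt zz)⁻¹ * (Real.sqrt zz)⁻¹ = zz⁻¹ := by
    rw [← mul_inv, Real.mul_self_sqrt hzzpos.le]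
  have hww : w ⬝ᵥ w = 1 := by
    rw [hw, smul_dotProduct, dotProduct_smul, smul_eq_mul, smul_eq_mul, ← mul_assoc, hsq,
      ← hzzdef]
    field_simp
  have hHw : Hᵀ *ᵥ w = 0 := by
    rw [hw, mulVec_smul, hHz, smul_zero]
  have hscale : ∀ N : Matrix (Fin m) (Fin m) ℝ, w ⬝ᵥ (N *ᵥ w) = zz⁻¹ * (z ⬝ᵥ (N *ᵥ z)) := by
    intro N
    rw [hw, smul_dotProduct, mulVec_smul, dotProduct_smul, smul_eq_mul, smul_eq_mul,
      ← mul_assoc, hsq]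
  have hlamw : lam ≤ w ⬝ᵥ ((A * Aᵀ) *ᵥ w) := by
    have h1 : lam = z ⬝ᵥ ((A * Aᵀ) *ᵥ z) := by
      rw [hlam1, hBt, dot_mul_transpose]
    have h2 : 0 ≤ z ⬝ᵥ ((A * Aᵀ) *ᵥ z) := by
      rw [dot_mul_transpose]
      exact dot_self_nonneg _
    rw [hscale (A * Aᵀ), h1]
    have h3 : zz⁻¹ * zz = 1 := by field_simp
    nlinarith [inv_nonneg.mpr hzzpos.le]
  have h6 : w ⬝ᵥ ((A * Aᵀ) *ᵥ w) ≤ w ⬝ᵥ ((C * Cᵀ) *ᵥ w) + 3 * ε * frobSq A := by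
    have := (abs_le.mp (hRQ w hww)).2
    linarith
  -- step 7 : rayleigh_orth
  have h7 : w ⬝ᵥ ((C * Cᵀ) *ᵥ w) ≤ ascEig (hermAAT C) ⟨m - 1 - k, by omega⟩ := by
    apply rayleigh_orth (hermAAT C) hklt
      (h := fun j => (fun x => H x j))
    · intro j j'
      have h1 : (fun x => H x j) ⬝ᵥ (fun x => H x j') = (Hᵀ * H) j j' := by
        rw [Matrix.mul_apply]
        apply Finset.sum_congr rfl
        intro x _
        rfl
      rw [h1, hH, Matrix.one_apply]
    · intro j
      have h1 := hsing j
      rwa [svalSq_eq_ascEig C (j : ℕ) (by omega)] at h1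
    · exact hww
    · intro j
      have h1 : (fun x => H x j) ⬝ᵥ w = (Hᵀ *ᵥ w) j := by
        rw [mulVec]
        rfl
      rw [h1, hHw]
      rfl
  have h7' : ascEig (hermAAT C) ⟨m - 1 - k, by omega⟩ = svalSq C k :=
    (svalSq_eq_ascEig C k hklt).symm
  -- step 8 : weyl
  have h8 : svalSq C k ≤ svalSq A k + 3 * ε * frobSq A := by
    rw [svalSq_eq_ascEig C k hklt, svalSq_eq_ascEig A k hklt]
    apply weyl (hermAAT A) (hermAAT C) (δ := 3 * ε * frobSq A) _ hklt
    intro x hx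
    have := (abs_le.mp (hRQ x hx)).1
    linarith
  calc lam ≤ w ⬝ᵥ ((A * Aᵀ) *ᵥ w) := hlamw
    _ ≤ w ⬝ᵥ ((C * Cᵀ) *ᵥ w) + 3 * ε * frobSq A := h6
    _ ≤ svalSq C k + 3 * ε * frobSq A := by rw [← h7']; linarith
    _ ≤ svalSq A k + 6 * ε * frobSq A := by linarith
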